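/- Let (χ, μ) be a probability space and w: χ × χ → [0, 1] a symmetric measurable kernel with degree function deg(x) = ∫_χ w(x,z) dμ(z). Let n ≥ 2, let X₁, …, Xₙ be i.i.d. samples from μ, and define the n×n matrices: A with A_{ij} = w(Xᵢ, Xⱼ) for i ≠ j and A_{ii} = 0; the diagonal matrix D with D_{ii} = Σ_j A_{ij}; and the diagonal matrix Δ with Δ_{ii} = deg(Xᵢ). Then for every τ > 0, with probability at least 1 − 2·n·e^{−2τ²}: |(1/(n−1))·D_{ii} − Δ_{ii}| ≤ 2τ/√n for every i ∈ {1, …, n}. -/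

import Mathlib

open MeasureTheory Real
open scoped ENNReal NNReal


open MeasureTheory


-- Hoeffding-type bound with constant 1/4
lemma aux_hoeffding_quarter {p : ℝ} (hp0 : 0 ≤ p) (hp1 : p ≤ 1) (l : ℝ) :
    (1 - p + p * Real.exp l) * Real.exp (-(l * p)) ≤ Real.exp (l ^ 2 / 4) := by
  set F : ℝ → ℝ := fun t => 1 - p + p * Real.exp t with hFdef
  have hF : ∀ t, 0 < F t := by
    intro t
    have het := Real.exp_pos t
    rcases eq_or_lt_of_le hp0 with h | h
    · simp [hFdef, ← h]
    · have : 0 < p * Real.exp t := mul_pos h het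
      simp only [hFdef]; linarith
  set q : ℝ → ℝ := fun t => p * Real.exp t / F t with hqdef
  have hq0 : ∀ t, 0 ≤ q t := fun t =>
    div_nonneg (mul_nonneg hp0 (Real.exp_pos t).le) (hF t).le
  have hq1 : ∀ t, q t ≤ 1 := by
    intro t
    rw [hqdef, div_le_one (hF t)]
    simp only [hFdef]; linarith
  have hFd : ∀ t, HasDerivAt F (p * Real.exp t) t := by
    intro t
    exact ((Real.hasDerivAt_exp t).const_mul p).const_add (1 - p)
  have hqd : ∀ t, HasDerivAt q (q t * (1 - q t)) t := by
    intro t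
    have h1 : HasDerivAt (fun t => p * Real.exp t) (p * Real.exp t) t :=
      (Real.hasDerivAt_exp t).const_mul p
    have := h1.div (hFd t) (hF t).ne'
    refine this.congr_deriv ?_
    have hFt := (hF t).ne'
    simp only [hqdef]
    field_simp
  have hqlip : ∀ t, |q t - p| ≤ |t| / 4 := by
    have hdiff : Differentiable ℝ q := fun t => (hqd t).differentiableAt
    have hlip : LipschitzWith (4⁻¹ : NNReal) q := by
      apply lipschitzWith_of_nnnorm_deriv_le hdiff
      intro x
      rw [(hqd x).deriv]
      rw [← NNReal.coe_le_coe, coe_nnnorm, Real.norm_eq_abs]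
      rw [abs_of_nonneg (mul_nonneg (hq0 x) (sub_nonneg.2 (hq1 x)))]
      push_cast
      nlinarith [sq_nonneg (q x - 1/2)]
    intro t
    have hq0' : q 0 = p := by
      simp only [hqdef, hFdef, Real.exp_zero, mul_one]
      field_simp
      ring
    have := hlip.dist_le_mul t 0
    rw [Real.dist_eq, Real.dist_eq, hq0'] at this
    simpa using this.trans_eq (by push_cast; ring)
  set g : ℝ → ℝ := fun t => t ^ 2 / 4 + t * p - Real.log (F t) with hgdef
  have hgd : ∀ t, HasDerivAt g (t / 2 + p - q t) t := by
    intro t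
    have h1 : HasDerivAt (fun t : ℝ => t ^ 2 / 4 + t * p) (t / 2 + p) t := by
      have := ((hasDerivAt_pow 2 t).div_const 4).add ((hasDerivAt_id t).mul_const p)
      refine this.congr_deriv ?_
      norm_num
      ring
    have h2 : HasDerivAt (fun t => Real.log (F t)) (q t) t := by
      have := (hFd t).log (hF t).ne'
      simpa [hqdef] using this
    exact h1.sub h2
  have hg0 : g 0 = 0 := by
    simp [hgdef, hFdef]
  have hgnonneg : ∀ t, 0 ≤ g t := by
    have hcont : Continuous g := by
      have : Differentiable ℝ g := fun t => (hgd t).differentiableAt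
      exact this.continuous
    intro t
    rcases le_total 0 t with ht | ht
    · have hmono : MonotoneOn g (Set.Ici (0:ℝ)) := by
        apply monotoneOn_of_deriv_nonneg (convex_Ici 0) hcont.continuousOn
          (fun x _ => ((hgd x).differentiableAt).differentiableWithinAt)
        intro x hx
        rw [interior_Ici] at hx
        have hx' : (0:ℝ) < x := hx
        rw [(hgd x).deriv]
        have h := (abs_le.mp (hqlip x)).2
        rw [abs_of_pos hx'] at h
        linarith
      have := hmono (Set.self_mem_Ici) (Set.mem_Ici.2 ht) ht
      rwa [hg0] at this
    · have hanti : AntitoneOn g (Set.Iic (0:ℝ)) := by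
        apply antitoneOn_of_deriv_nonpos (convex_Iic 0) hcont.continuousOn
          (fun x _ => ((hgd x).differentiableAt).differentiableWithinAt)
        intro x hx
        rw [interior_Iic] at hx
        have hx' : x < (0:ℝ) := hx
        rw [(hgd x).deriv]
        have h := (abs_le.mp (hqlip x)).1
        rw [abs_of_neg hx'] at h
        linarith
      have := hanti (Set.mem_Iic.2 ht) (Set.self_mem_Iic) ht
      rwa [hg0] at this
  have hkey : Real.log (F l) - l * p ≤ l ^ 2 / 4 := by
    have := hgnonneg l
    simp only [hgdef] at this
    linarith
  calc F l * Real.exp (-(l * p)) = Real.exp (Real.log (F l) - l * p) := by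
        rw [Real.exp_sub, Real.exp_log (hF l), Real.exp_neg]
        ring
    _ ≤ Real.exp (l ^ 2 / 4) := Real.exp_le_exp.2 hkey

lemma aux_mgf_one {χ : Type*} [MeasurableSpace χ] (μ : Measure χ) [IsProbabilityMeasure μ]
    (g : χ → ℝ) (hg : Measurable g) (hg0 : ∀ z, 0 ≤ g z) (hg1 : ∀ z, g z ≤ 1) (l : ℝ) :
    ∫ z, Real.exp (l * (g z - ∫ z, g z ∂μ)) ∂μ ≤ Real.exp (l ^ 2 / 4) := by
  set p := ∫ z, g z ∂μ with hpdef
  have hgint : Integrable g μ := by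
    refine ⟨hg.aestronglyMeasurable, HasFiniteIntegral.of_bounded (C := 1) ?_⟩
    exact ae_of_all _ fun z => by
      rw [Real.norm_eq_abs, abs_le]; exact ⟨by linarith [hg0 z], hg1 z⟩
  have hp0 : 0 ≤ p := integral_nonneg hg0
  have hp1 : p ≤ 1 := by
    have := integral_mono hgint (integrable_const 1) hg1
    simpa using this
  have hexpmeas : Measurable fun z => Real.exp (l * (g z - p)) :=
    (((hg.sub measurable_const).const_mul l).exp)
  have hexpint : Integrable (fun z => Real.exp (l * (g z - p))) μ := by
    refine ⟨hexpmeas.aestronglyMeasurable, HasFiniteIntegral.of_bounded (C := Real.exp |l|) ?_⟩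
    refine ae_of_all _ fun z => ?_
    rw [Real.norm_eq_abs, abs_of_pos (Real.exp_pos _)]
    apply Real.exp_le_exp.2
    calc l * (g z - p) ≤ |l * (g z - p)| := le_abs_self _
      _ = |l| * |g z - p| := abs_mul _ _
      _ ≤ |l| * 1 := by
          apply mul_le_mul_of_nonneg_left _ (abs_nonneg l)
          rw [abs_le]; constructor <;> [linarith [hg0 z, hp1]; linarith [hg1 z, hp0]]
      _ = |l| := mul_one _
  have hpoint : ∀ z, Real.exp (l * g z) ≤ (1 - g z) + g z * Real.exp l := by
    intro z
    have hconv := convexOn_exp.2 (Set.mem_univ (0:ℝ)) (Set.mem_univ l)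
      (by linarith [hg1 z] : (0:ℝ) ≤ 1 - g z) (hg0 z) (by ring)
    simpa [smul_eq_mul, mul_comm] using hconv
  have hsplit : (fun z => Real.exp (l * (g z - p))) =
      fun z => Real.exp (l * g z) * Real.exp (-(l * p)) := by
    funext z; rw [← Real.exp_add]; ring_nf
  have hexpgint : Integrable (fun z => Real.exp (l * g z)) μ := by
    have : (fun z => Real.exp (l * g z)) =
        fun z => Real.exp (l * (g z - p)) * Real.exp (l * p) := by
      funext z; rw [← Real.exp_add]; ring_nf
    rw [this]; exact hexpint.mul_const _
  have hbound : ∫ z, Real.exp (l * g z) ∂μ ≤ 1 - p + p * Real.exp l := by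
    have h1 : ∫ z, Real.exp (l * g z) ∂μ ≤ ∫ z, (1 - g z) + g z * Real.exp l ∂μ :=
      integral_mono hexpgint (((integrable_const 1).sub hgint).add (hgint.mul_const _)) hpoint
    have h2 : ∫ z, (1 - g z) + g z * Real.exp l ∂μ = 1 - p + p * Real.exp l := by
      have heq : ∀ z, (1 - g z) + g z * Real.exp l = 1 + (Real.exp l - 1) * g z := by
        intro z; ring
      simp_rw [heq]
      rw [integral_add (integrable_const 1) (hgint.const_mul _), integral_const_mul]
      simp only [integral_const, measure_univ, ENNReal.toReal_one, smul_eq_mul, one_mul, ← hpdef, probReal_univ]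
      ring
    linarith
  calc ∫ z, Real.exp (l * (g z - p)) ∂μ
      = (∫ z, Real.exp (l * g z) ∂μ) * Real.exp (-(l * p)) := by
        rw [hsplit, integral_mul_const]
    _ ≤ (1 - p + p * Real.exp l) * Real.exp (-(l * p)) :=
        mul_le_mul_of_nonneg_right hbound (Real.exp_pos _).le
    _ ≤ Real.exp (l ^ 2 / 4) := aux_hoeffding_quarter hp0 hp1 l

lemma aux_integral_pi_pow {χ : Type*} [MeasurableSpace χ] (μ : Measure χ)
    [IsProbabilityMeasure μ] (m : ℕ) (f : χ → ℝ) :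
    ∫ y : Fin m → χ, ∏ j, f (y j) ∂(Measure.pi fun _ => μ) = (∫ z, f z ∂μ) ^ m := by
  induction m with
  | zero => simp
  | succ m ih =>
    have mp := measurePreserving_piFinSuccAbove (fun _ : Fin (m + 1) => μ) 0
    have hcomp := mp.integral_comp'
      (g := fun z : χ × (Fin m → χ) => f z.1 * ∏ k, f (z.2 k))
    have heq : (fun y : Fin (m+1) → χ =>
        (fun z : χ × (Fin m → χ) => f z.1 * ∏ k, f (z.2 k))
          ((MeasurableEquiv.piFinSuccAbove (fun _ => χ) 0) y)) =
        fun y => ∏ j, f (y j) := by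
      funext y
      simp only [MeasurableEquiv.piFinSuccAbove]
      rw [Fin.prod_univ_succ]
      simp [Fin.removeNth, Fin.tail]
    rw [← heq, hcomp]
    rw [integral_prod_mul (f := f) (g := fun y : Fin m → χ => ∏ k, f (y k)), ih]
    ring

lemma aux_chernoff {χ : Type*} [MeasurableSpace χ] (μ : Measure χ) [IsProbabilityMeasure μ]
    (m : ℕ) (hm : 0 < m) (g : χ → ℝ) (hg : Measurable g)
    (hg0 : ∀ z, 0 ≤ g z) (hg1 : ∀ z, g z ≤ 1) (ε : ℝ) (hε : 0 ≤ ε) :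
    (Measure.pi fun _ : Fin m => μ) {y | ε ≤ ∑ j, (g (y j) - ∫ z, g z ∂μ)} ≤
      ENNReal.ofReal (Real.exp (-ε ^ 2 / m)) := by
  set p := ∫ z, g z ∂μ with hpdef
  have hgint : Integrable g μ := by
    refine ⟨hg.aestronglyMeasurable, HasFiniteIntegral.of_bounded (C := 1) ?_⟩
    exact ae_of_all _ fun z => by
      rw [Real.norm_eq_abs, abs_le]; exact ⟨by linarith [hg0 z], hg1 z⟩
  have hp0 : 0 ≤ p := integral_nonneg hg0
  have hp1 : p ≤ 1 := by
    have := integral_mono hgint (integrable_const 1) hg1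
    simpa using this
  set X : (Fin m → χ) → ℝ := fun y => ∑ j, (g (y j) - p) with hXdef
  have hXmeas : Measurable X :=
    Finset.measurable_sum _ fun j _ => (hg.comp (measurable_pi_apply j)).sub measurable_const
  set t : ℝ := 2 * ε / m with htdef
  have hmpos : (0:ℝ) < m := by exact_mod_cast hm
  have ht : 0 ≤ t := by positivity
  have hXbdd : ∀ y, |X y| ≤ m := by
    intro y
    calc |X y| ≤ ∑ j, |g (y j) - p| := Finset.abs_sum_le_sum_abs _ _
      _ ≤ ∑ _j : Fin m, (1:ℝ) := by
          apply Finset.sum_le_sum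
          intro j _
          rw [abs_le]
          exact ⟨by linarith [hg0 (y j)], by linarith [hg1 (y j)]⟩
      _ = m := by simp
  have hint : Integrable (fun y => Real.exp (t * X y)) (Measure.pi fun _ : Fin m => μ) := by
    refine ⟨((hXmeas.const_mul t).exp).aestronglyMeasurable,
      HasFiniteIntegral.of_bounded (C := Real.exp (t * m)) ?_⟩
    refine ae_of_all _ fun y => ?_
    rw [Real.norm_eq_abs, abs_of_pos (Real.exp_pos _)]
    apply Real.exp_le_exp.2
    calc t * X y ≤ t * |X y| := mul_le_mul_of_nonneg_left (le_abs_self _) ht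
      _ ≤ t * m := mul_le_mul_of_nonneg_left (hXbdd y) ht
  have hmarkov := ProbabilityTheory.measure_ge_le_exp_mul_mgf
    (X := X) (μ := Measure.pi fun _ : Fin m => μ) ε ht hint
  have hmgf : ProbabilityTheory.mgf X (Measure.pi fun _ : Fin m => μ) t =
      ∫ y : Fin m → χ, ∏ j, Real.exp (t * (g (y j) - p)) ∂(Measure.pi fun _ => μ) := by
    unfold ProbabilityTheory.mgf
    congr 1
    funext y
    show Real.exp (t * ∑ j, (g (y j) - p)) = ∏ j, Real.exp (t * (g (y j) - p))
    rw [Finset.mul_sum, Real.exp_sum]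
  have hmgf2 : ProbabilityTheory.mgf X (Measure.pi fun _ : Fin m => μ) t ≤
      Real.exp (t ^ 2 / 4) ^ m := by
    rw [hmgf, aux_integral_pi_pow μ m (fun z => Real.exp (t * (g z - p)))]
    have h1 := aux_mgf_one μ g hg hg0 hg1 t
    have h0 : 0 ≤ ∫ z, Real.exp (t * (g z - p)) ∂μ :=
      integral_nonneg fun z => (Real.exp_pos _).le
    rw [← hpdef] at h1
    exact pow_le_pow_left₀ h0 h1 m
  have hcalc : Real.exp (-t * ε) * Real.exp (t ^ 2 / 4) ^ m = Real.exp (-ε ^ 2 / m) := by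
    rw [← Real.exp_nat_mul, ← Real.exp_add]
    congr 1
    rw [htdef]
    field_simp
    ring
  have hfin : ((Measure.pi fun _ : Fin m => μ) {y | ε ≤ X y}).toReal ≤
      Real.exp (-ε ^ 2 / m) := by
    calc ((Measure.pi fun _ : Fin m => μ) {y | ε ≤ X y}).toReal
        ≤ Real.exp (-t * ε) * ProbabilityTheory.mgf X (Measure.pi fun _ : Fin m => μ) t :=
          hmarkov
      _ ≤ Real.exp (-t * ε) * Real.exp (t ^ 2 / 4) ^ m :=
          mul_le_mul_of_nonneg_left hmgf2 (Real.exp_pos _).le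
      _ = Real.exp (-ε ^ 2 / m) := hcalc
  have := ENNReal.ofReal_le_ofReal hfin
  rwa [ENNReal.ofReal_toReal (measure_ne_top _ _)] at this

lemma aux_twoside {χ : Type*} [MeasurableSpace χ] (μ : Measure χ) [IsProbabilityMeasure μ]
    (m : ℕ) (hm : 0 < m) (g : χ → ℝ) (hg : Measurable g)
    (hg0 : ∀ z, 0 ≤ g z) (hg1 : ∀ z, g z ≤ 1) (s : ℝ) (hs : 0 ≤ s) :
    (Measure.pi fun _ : Fin m => μ)
        {y | s < |(1 / (m:ℝ)) * ∑ j, g (y j) - ∫ z, g z ∂μ|} ≤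
      ENNReal.ofReal (2 * Real.exp (-((m:ℝ) * s ^ 2))) := by
  set p := ∫ z, g z ∂μ with hpdef
  have hmpos : (0:ℝ) < m := by exact_mod_cast hm
  have hgint : Integrable g μ := by
    refine ⟨hg.aestronglyMeasurable, HasFiniteIntegral.of_bounded (C := 1) ?_⟩
    exact ae_of_all _ fun z => by
      rw [Real.norm_eq_abs, abs_le]; exact ⟨by linarith [hg0 z], hg1 z⟩
  set g' : χ → ℝ := fun z => 1 - g z with hg'def
  have hp' : ∫ z, g' z ∂μ = 1 - p := by
    rw [hg'def]
    rw [integral_sub (integrable_const 1) hgint]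
    simp [hpdef]
  have hsub : {y : Fin m → χ | s < |(1 / (m:ℝ)) * ∑ j, g (y j) - p|} ⊆
      {y : Fin m → χ | (m:ℝ) * s ≤ ∑ j, (g (y j) - p)} ∪
      {y : Fin m → χ | (m:ℝ) * s ≤ ∑ j, (g' (y j) - ∫ z, g' z ∂μ)} := by
    intro y hy
    simp only [Set.mem_setOf_eq] at hy
    have hS : (1 / (m:ℝ)) * ∑ j, g (y j) - p = (1/(m:ℝ)) * ∑ j, (g (y j) - p) := by
      rw [Finset.sum_sub_distrib]
      field_simp
      simp
    rw [hS, abs_mul, abs_of_pos (by positivity : (0:ℝ) < 1/(m:ℝ))] at hy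
    have h2 : (m:ℝ) * s < |∑ j, (g (y j) - p)| := by
      have h3 := mul_lt_mul_of_pos_left hy hmpos
      have h4 : (m:ℝ) * (1 / (m:ℝ) * |∑ j, (g (y j) - p)|) = |∑ j, (g (y j) - p)| := by
        field_simp
      linarith
    rcases lt_abs.mp h2 with h | h
    · left; exact Set.mem_setOf_eq ▸ h.le
    · right
      rw [Set.mem_setOf_eq, hp']; simp only [hg'def]
      have : ∑ j, ((1 : ℝ) - g (y j) - (1 - p)) = -∑ j, (g (y j) - p) := by
        rw [← Finset.sum_neg_distrib]
        congr 1; funext j; ring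
      rw [this]
      linarith
  calc (Measure.pi fun _ : Fin m => μ)
        {y | s < |(1 / (m:ℝ)) * ∑ j, g (y j) - p|}
      ≤ (Measure.pi fun _ : Fin m => μ)
          ({y : Fin m → χ | (m:ℝ) * s ≤ ∑ j, (g (y j) - p)} ∪
           {y : Fin m → χ | (m:ℝ) * s ≤ ∑ j, (g' (y j) - ∫ z, g' z ∂μ)}) :=
        measure_mono hsub
    _ ≤ (Measure.pi fun _ : Fin m => μ) {y : Fin m → χ | (m:ℝ) * s ≤ ∑ j, (g (y j) - p)} +
        (Measure.pi fun _ : Fin m => μ)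
          {y : Fin m → χ | (m:ℝ) * s ≤ ∑ j, (g' (y j) - ∫ z, g' z ∂μ)} :=
        measure_union_le _ _
    _ ≤ ENNReal.ofReal (Real.exp (-((m:ℝ)*s) ^ 2 / m)) +
        ENNReal.ofReal (Real.exp (-((m:ℝ)*s) ^ 2 / m)) := by
        gcongr
        · rw [hpdef]
          exact aux_chernoff μ m hm g hg hg0 hg1 ((m:ℝ)*s) (by positivity)
        · exact aux_chernoff μ m hm g' (measurable_const.sub hg)
            (fun z => by simp [hg'def]; linarith [hg1 z])
            (fun z => by simp [hg'def]; linarith [hg0 z]) ((m:ℝ)*s) (by positivity)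
    _ = ENNReal.ofReal (2 * Real.exp (-((m:ℝ) * s ^ 2))) := by
        rw [← ENNReal.ofReal_add (Real.exp_pos _).le (Real.exp_pos _).le]
        congr 1
        have : -((m:ℝ)*s) ^ 2 / m = -((m:ℝ) * s ^ 2) := by
          field_simp
        rw [this]
        ring

/-- Concentration of degrees for a graphon sample: with probability at least
`1 − 2n·e^{−2τ²}`, for every `i`, the scaled degree `(1/(n−1))·D_{ii}` of the sampled
weighted graph is within `2τ/√n` of the graphon degree `deg(Xᵢ) = ∫ w(Xᵢ, z) dμ(z)`. -/
theorem stmt11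
    {χ : Type*} [MeasurableSpace χ] (μ : Measure χ) [IsProbabilityMeasure μ]
    (w : χ → χ → ℝ) (hwmeas : Measurable fun q : χ × χ => w q.1 q.2)
    (hwsymm : ∀ x y, w x y = w y x)
    (hw01 : ∀ x y, w x y ∈ Set.Icc (0 : ℝ) 1)
    (n : ℕ) (hn : 2 ≤ n)
    (τ : ℝ) (hτ : 0 < τ) :
    ENNReal.ofReal (1 - 2 * n * Real.exp (-2 * τ ^ 2)) ≤
      Measure.pi (fun _ : Fin n => μ)
        {X : Fin n → χ | ∀ i : Fin n,
          |(1 / ((n : ℝ) - 1)) * (∑ j, if i = j then (0 : ℝ) else w (X i) (X j)) -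
            ∫ z, w (X i) z ∂μ| ≤ 2 * τ / Real.sqrt n} := by
  obtain ⟨m, rfl⟩ : ∃ m, n = m + 1 := ⟨n - 1, by omega⟩
  have hm : 1 ≤ m := by omega
  have hw0 : ∀ x y, 0 ≤ w x y := fun x y => (hw01 x y).1
  have hw1 : ∀ x y, w x y ≤ 1 := fun x y => (hw01 x y).2
  set deg : χ → ℝ := fun x => ∫ z, w x z ∂μ with hdegdef
  have hdegmeas : Measurable deg :=
    hwmeas.stronglyMeasurable.integral_prod_right'.measurable
  set s' : ℝ := 2 * τ / Real.sqrt (m + 1 : ℕ) with hs'def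
  have hs'nonneg : 0 ≤ s' := by
    rw [hs'def]; positivity
  set G : Set (Fin (m+1) → χ) := {X | ∀ i : Fin (m+1),
      |(1 / (((m+1 : ℕ) : ℝ) - 1)) * (∑ j, if i = j then (0 : ℝ) else w (X i) (X j)) -
        deg (X i)| ≤ s'} with hGdef
  set bad : Fin (m+1) → Set (Fin (m+1) → χ) := fun i => {X | s' <
      |(1 / (((m+1 : ℕ) : ℝ) - 1)) * (∑ j, if i = j then (0 : ℝ) else w (X i) (X j)) -
        deg (X i)|} with hbaddef
  have hfmeas : ∀ i : Fin (m+1), Measurable fun X : Fin (m+1) → χ =>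
      |(1 / (((m+1 : ℕ) : ℝ) - 1)) * (∑ j, if i = j then (0 : ℝ) else w (X i) (X j)) -
        deg (X i)| := by
    intro i
    apply Measurable.abs
    apply Measurable.sub
    · apply Measurable.const_mul
      apply Finset.measurable_sum
      intro j _
      by_cases hij : i = j
      · simp [hij]
      · simp only [if_neg hij]
        exact hwmeas.comp (f := fun X : Fin (m+1) → χ => (X i, X j))
          ((measurable_pi_apply i).prodMk (measurable_pi_apply j))
    · exact hdegmeas.comp (measurable_pi_apply i)
  have hGmeas : MeasurableSet G := by
    rw [hGdef]
    have : G = ⋂ i : Fin (m+1), {X | |(1 / (((m+1 : ℕ) : ℝ) - 1)) *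
        (∑ j, if i = j then (0 : ℝ) else w (X i) (X j)) - deg (X i)| ≤ s'} := by
      ext X; simp [hGdef, Set.mem_iInter]
    rw [← hGdef, this]
    exact MeasurableSet.iInter fun i => measurableSet_le (hfmeas i) measurable_const
  have hbadmeas : ∀ i, MeasurableSet (bad i) :=
    fun i => measurableSet_lt measurable_const (hfmeas i)
  have hcompl : Gᶜ = ⋃ i, bad i := by
    ext X
    simp [hGdef, hbaddef, not_forall, not_le]
  -- per-index bound
  have hbad_le : ∀ i, Measure.pi (fun _ : Fin (m+1) => μ) (bad i) ≤
      ENNReal.ofReal (2 * Real.exp (-2 * τ ^ 2)) := by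
    intro i
    have mp := measurePreserving_piFinSuccAbove (fun _ : Fin (m+1) => μ) i
    set B : Set (χ × (Fin m → χ)) := {z | s' <
        |(1 / (m:ℝ)) * ∑ k, w z.1 (z.2 k) - ∫ zz, w z.1 zz ∂μ|} with hBdef
    have hBmeas : MeasurableSet B := by
      apply measurableSet_lt measurable_const
      apply Measurable.abs
      apply Measurable.sub
      · apply Measurable.const_mul
        apply Finset.measurable_sum
        intro k _
        exact hwmeas.comp (f := fun z : χ × (Fin m → χ) => (z.1, z.2 k))
          (measurable_fst.prodMk ((measurable_pi_apply k).comp measurable_snd))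
      · exact hdegmeas.comp measurable_fst
    have hpre : bad i = (MeasurableEquiv.piFinSuccAbove (fun _ : Fin (m+1) => χ) i) ⁻¹' B := by
      ext X
      simp only [hbaddef, hBdef, Set.mem_preimage, Set.mem_setOf_eq,
        MeasurableEquiv.piFinSuccAbove, MeasurableEquiv.coe_mk, Equiv.symm_symm,
        Fin.insertNthEquiv_symm_apply]
      have hterm : ∀ k : Fin m, (if i = i.succAbove k then (0:ℝ)
          else w (X i) (X (i.succAbove k))) = w (X i) (X (i.succAbove k)) :=
        fun k => if_neg (Fin.succAbove_ne i k).symm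
      have hsum : (∑ j, if i = j then (0:ℝ) else w (X i) (X j)) =
          ∑ k : Fin m, w (X i) (X (i.succAbove k)) := by
        rw [Fin.sum_univ_succAbove (fun j => if i = j then (0:ℝ) else w (X i) (X j)) i]
        simp [hterm]
      have hcoef : (1 / (((m+1 : ℕ) : ℝ) - 1)) = 1 / (m:ℝ) := by push_cast; ring_nf
      rw [hsum, hcoef]
      have hrn : ∀ k : Fin m, (i.removeNth X) k = X (i.succAbove k) := fun k => rfl
      constructor
      · intro h
        exact h
      · intro h
        exact h
    have h1 : Measure.pi (fun _ : Fin (m+1) => μ) (bad i) =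
        (μ.prod (Measure.pi fun _ : Fin m => μ)) B := by
      rw [hpre]
      exact mp.measure_preimage hBmeas.nullMeasurableSet
    have hslice : ∀ x : χ, (Measure.pi fun _ : Fin m => μ) (Prod.mk x ⁻¹' B) ≤
        ENNReal.ofReal (2 * Real.exp (-2 * τ ^ 2)) := by
      intro x
      have hsl : Prod.mk x ⁻¹' B =
          {y : Fin m → χ | s' < |(1 / (m:ℝ)) * ∑ k, w x (y k) - ∫ zz, w x zz ∂μ|} := by
        ext y; simp [hBdef]
      rw [hsl]
      have hwx : Measurable (w x) := hwmeas.comp measurable_prodMk_left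
      have := aux_twoside μ m (by omega) (w x) hwx (hw0 x) (hw1 x) s' hs'nonneg
      refine this.trans (ENNReal.ofReal_le_ofReal ?_)
      have hmpos : (0:ℝ) < (m:ℝ) + 1 := by positivity
      have hm1 : (1:ℝ) ≤ (m:ℝ) := by exact_mod_cast hm
      have hsq : s' ^ 2 = 4 * τ ^ 2 / ((m:ℝ) + 1) := by
        rw [hs'def, div_pow, Real.sq_sqrt (by positivity)]
        push_cast
        ring
      have hexp : -((m:ℝ) * s' ^ 2) ≤ -2 * τ ^ 2 := by
        rw [hsq]
        have heq : (m:ℝ) * (4 * τ ^ 2 / ((m:ℝ) + 1)) - 2 * τ ^ 2 =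
            (2 * τ ^ 2 * ((m:ℝ) - 1)) / ((m:ℝ) + 1) := by field_simp; ring
        have h0 : (0:ℝ) ≤ (2 * τ ^ 2 * ((m:ℝ) - 1)) / ((m:ℝ) + 1) :=
          div_nonneg (by nlinarith [sq_nonneg τ]) hmpos.le
        linarith
      have := Real.exp_le_exp.2 hexp
      linarith [this]
    calc Measure.pi (fun _ : Fin (m+1) => μ) (bad i)
        = (μ.prod (Measure.pi fun _ : Fin m => μ)) B := h1
      _ = ∫⁻ x, (Measure.pi fun _ : Fin m => μ) (Prod.mk x ⁻¹' B) ∂μ :=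
          Measure.prod_apply hBmeas
      _ ≤ ∫⁻ _x, ENNReal.ofReal (2 * Real.exp (-2 * τ ^ 2)) ∂μ :=
          lintegral_mono fun x => hslice x
      _ = ENNReal.ofReal (2 * Real.exp (-2 * τ ^ 2)) := by
          rw [lintegral_const, measure_univ, mul_one]
  -- union bound
  have hunion : Measure.pi (fun _ : Fin (m+1) => μ) Gᶜ ≤
      ENNReal.ofReal (2 * (m+1 : ℕ) * Real.exp (-2 * τ ^ 2)) := by
    rw [hcompl]
    calc Measure.pi (fun _ : Fin (m+1) => μ) (⋃ i, bad i)
        ≤ ∑' i : Fin (m+1), Measure.pi (fun _ : Fin (m+1) => μ) (bad i) :=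
          measure_iUnion_le _
      _ = ∑ i : Fin (m+1), Measure.pi (fun _ : Fin (m+1) => μ) (bad i) := tsum_fintype _
      _ ≤ ∑ _i : Fin (m+1), ENNReal.ofReal (2 * Real.exp (-2 * τ ^ 2)) :=
          Finset.sum_le_sum fun i _ => hbad_le i
      _ = ((m+1 : ℕ) : ℝ≥0∞) * ENNReal.ofReal (2 * Real.exp (-2 * τ ^ 2)) := by
          rw [Finset.sum_const, Finset.card_univ, Fintype.card_fin, nsmul_eq_mul]
      _ = ENNReal.ofReal (2 * (m+1 : ℕ) * Real.exp (-2 * τ ^ 2)) := by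
          rw [← ENNReal.ofReal_natCast, ← ENNReal.ofReal_mul (by positivity)]
          congr 1
          ring
  -- conclude
  have hGprob : Measure.pi (fun _ : Fin (m+1) => μ) G =
      1 - Measure.pi (fun _ : Fin (m+1) => μ) Gᶜ := by
    have := prob_compl_eq_one_sub (μ := Measure.pi (fun _ : Fin (m+1) => μ)) hGmeas.compl
    rwa [compl_compl] at this
  have hfinal : ENNReal.ofReal (1 - 2 * ((m+1 : ℕ) : ℝ) * Real.exp (-2 * τ ^ 2)) ≤
      Measure.pi (fun _ : Fin (m+1) => μ) G := by
    rw [ENNReal.ofReal_sub _ (by positivity), ENNReal.ofReal_one, hGprob]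
    exact tsub_le_tsub_left hunion 1
  exact hfinal
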